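/- arXiv:2603.03281 — 3 statements merged into one kernel-verified Lean document; each statement's English description precedes it below -/
import Mathlib

section
/- Let s : ℝ → ℝ^d be differentiable with s(0) ≠ 0. Suppose there exists η > 0 such that for all t ≥ 0 with s(t) ≠ 0, ⟪s(t), s'(t)⟫ ≤ -η * ‖s(t)‖. Then there exists T ≤ ‖s(0)‖ / η such that s(T) = 0. -/
open RealInnerProductSpace

theorem stmt_1 {d : ℕ} (s : ℝ → EuclideanSpace ℝ (Fin d)) (hs : Differentiable ℝ s)
    (h0 : s 0 ≠ 0) (η : ℝ) (hη : 0 < η)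
    (hdecay : ∀ t : ℝ, 0 ≤ t → s t ≠ 0 → ⟪s t, deriv s t⟫ ≤ -η * ‖s t‖) :
    ∃ T : ℝ, T ≤ ‖s 0‖ / η ∧ s T = 0 := by
  by_contra hcon
  push_neg at hcon
  set T0 : ℝ := ‖s 0‖ / η with hT0
  have hT0pos : 0 < T0 := div_pos (norm_pos_iff.mpr h0) hη
  have hne : ∀ t, t ≤ T0 → s t ≠ 0 := fun t ht => hcon t ht
  -- derivative of ‖s ·‖ at points where s ≠ 0
  have hg : ∀ t : ℝ, s t ≠ 0 →
      HasDerivAt (fun u => ‖s u‖) (⟪s t, deriv s t⟫ / ‖s t‖) t := by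
    intro t hst
    have hinner : HasDerivAt (fun u => ⟪s u, s u⟫)
        (2 * ⟪s t, deriv s t⟫) t := by
      have := ((hs t).hasDerivAt.inner ℝ (hs t).hasDerivAt)
      refine this.congr_deriv ?_
      rw [real_inner_comm (deriv s t) (s t)]
      ring
    have hx : ⟪s t, s t⟫ ≠ 0 := fun h => hst (inner_self_eq_zero.mp h)
    have hsqrt := (Real.hasDerivAt_sqrt hx).comp t hinner
    have heq : (fun u => Real.sqrt ⟪s u, s u⟫) = fun u => ‖s u‖ := by
      funext u
      rw [real_inner_self_eq_norm_sq, Real.sqrt_sq (norm_nonneg _)]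
    rw [Function.comp_def, heq] at hsqrt
    refine hsqrt.congr_deriv ?_
    rw [real_inner_self_eq_norm_sq, Real.sqrt_sq (norm_nonneg _)]
    field_simp
  -- φ t = ‖s t‖ + η t is antitone on [0, T0]
  have hanti : AntitoneOn (fun t => ‖s t‖ + η * t) (Set.Icc 0 T0) := by
    apply antitoneOn_of_deriv_nonpos (convex_Icc 0 T0)
    · exact (hs.continuous.norm.add (continuous_const.mul continuous_id)).continuousOn
    · intro t ht
      rw [interior_Icc] at ht
      exact ((hg t (hne t ht.2.le)).add
        ((hasDerivAt_id t).const_mul η)).differentiableAt.differentiableWithinAt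
    · intro t ht
      rw [interior_Icc] at ht
      have hd : HasDerivAt (fun t => ‖s t‖ + η * t)
          (⟪s t, deriv s t⟫ / ‖s t‖ + η * 1) t :=
        (hg t (hne t ht.2.le)).add ((hasDerivAt_id t).const_mul η)
      rw [hd.deriv]
      have hnorm : (0:ℝ) < ‖s t‖ := norm_pos_iff.mpr (hne t ht.2.le)
      have : ⟪s t, deriv s t⟫ / ‖s t‖ ≤ -η := by
        rw [div_le_iff₀ hnorm]
        exact hdecay t ht.1.le (hne t ht.2.le)
      linarith
  have hfinal := hanti (Set.left_mem_Icc.mpr hT0pos.le)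
    (Set.right_mem_Icc.mpr hT0pos.le) hT0pos.le
  simp only at hfinal
  have hT0eq : η * T0 = ‖s 0‖ := by
    rw [hT0]
    field_simp
  have : ‖s T0‖ ≤ 0 := by linarith
  exact hne T0 le_rfl (norm_le_zero_iff.mp this)
end

section
/- Let Γ = w • I + ΔΓ be a linear operator on ℝ^D with ‖ΔΓ‖ (operator norm) ≤ ρ and w > ρ√D. For s ≠ 0, with control Δe = -k • sgn(s) (componentwise sign, so ‖sgn(s)‖₂ ≤ √D and ⟪s, sgn(s)⟫ = ‖s‖₁), one has ⟪s, Γ Δe⟫ ≤ -w k ‖s‖₁ + k ρ √D ‖s‖₂ ≤ -k(w - ρ√D)‖s‖₂. -/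
open RealInnerProductSpace

noncomputable def sgnVec {D : ℕ} (s : EuclideanSpace ℝ (Fin D)) : EuclideanSpace ℝ (Fin D) :=
  (EuclideanSpace.equiv (Fin D) ℝ).symm (fun i => Real.sign (s i))

lemma mul_sign_eq_abs (x : ℝ) : x * Real.sign x = |x| := by
  rcases lt_trichotomy x 0 with h | h | h
  · rw [Real.sign_of_neg h, abs_of_neg h]; ring
  · simp [h]
  · rw [Real.sign_of_pos h, abs_of_pos h]; ring

lemma abs_sign_le_one (x : ℝ) : |Real.sign x| ≤ 1 := by
  rcases lt_trichotomy x 0 with h | h | h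
  · rw [Real.sign_of_neg h]; norm_num
  · simp [h]
  · rw [Real.sign_of_pos h]; norm_num

theorem stmt_7 {D : ℕ} (ΔΓ : EuclideanSpace ℝ (Fin D) →L[ℝ] EuclideanSpace ℝ (Fin D))
    (w ρ k : ℝ) (hΔΓ : ‖ΔΓ‖ ≤ ρ) (hw : ρ * Real.sqrt D < w) (hk : 0 < k)
    (s : EuclideanSpace ℝ (Fin D)) (hs : s ≠ 0) :
    let Γ := w • ContinuousLinearMap.id ℝ (EuclideanSpace ℝ (Fin D)) + ΔΓ
    ⟪s, Γ ((-k) • sgnVec s)⟫ ≤ -(w * k * ∑ i, |s i|) + k * ρ * Real.sqrt D * ‖s‖ ∧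
    -(w * k * ∑ i, |s i|) + k * ρ * Real.sqrt D * ‖s‖ ≤ -(k * (w - ρ * Real.sqrt D) * ‖s‖) := by
  intro Γ
  have hρ : 0 ≤ ρ := le_trans (norm_nonneg _) hΔΓ
  have hsgn_apply : ∀ i, sgnVec s i = Real.sign (s i) := fun i => rfl
  have hinner : ⟪s, sgnVec s⟫ = ∑ i, |s i| := by
    rw [PiLp.inner_apply]
    exact Finset.sum_congr rfl fun i _ => by
      simp [hsgn_apply, RCLike.inner_apply, mul_sign_eq_abs]; rw [mul_comm, mul_sign_eq_abs]
  have hnsgn : ‖sgnVec s‖ ≤ Real.sqrt D := by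
    rw [EuclideanSpace.norm_eq]
    have : ∑ i, ‖sgnVec s i‖ ^ 2 ≤ (D : ℝ) := by
      calc ∑ i, ‖sgnVec s i‖ ^ 2 ≤ ∑ _i : Fin D, (1 : ℝ) := by
            apply Finset.sum_le_sum
            intro i _
            have := abs_sign_le_one (s i)
            rw [hsgn_apply, Real.norm_eq_abs]
            nlinarith [abs_nonneg (Real.sign (s i))]
        _ = D := by simp
    exact Real.sqrt_le_sqrt this
  have hl1 : ‖s‖ ≤ ∑ i, |s i| := by
    rw [EuclideanSpace.norm_eq]
    have h1 : ∑ i, ‖s i‖ ^ 2 ≤ (∑ i, |s i|) ^ 2 := by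
      simpa [Real.norm_eq_abs, sq_abs] using
        Finset.sum_sq_le_sq_sum_of_nonneg (s := Finset.univ) (f := fun i => |s i|)
          (fun i _ => abs_nonneg _)
    calc Real.sqrt (∑ i, ‖s i‖ ^ 2) ≤ Real.sqrt ((∑ i, |s i|) ^ 2) := Real.sqrt_le_sqrt h1
      _ = ∑ i, |s i| := Real.sqrt_sq (Finset.sum_nonneg fun i _ => abs_nonneg _)
  have hΓ : Γ ((-k) • sgnVec s) = (-k) • (w • sgnVec s + ΔΓ (sgnVec s)) := by
    rw [map_smul]; rfl
  have hΔ : |⟪s, ΔΓ (sgnVec s)⟫| ≤ ‖s‖ * (ρ * Real.sqrt D) := by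
    calc |⟪s, ΔΓ (sgnVec s)⟫| ≤ ‖s‖ * ‖ΔΓ (sgnVec s)‖ := abs_real_inner_le_norm _ _
      _ ≤ ‖s‖ * (ρ * Real.sqrt D) := by
          apply mul_le_mul_of_nonneg_left _ (norm_nonneg s)
          calc ‖ΔΓ (sgnVec s)‖ ≤ ‖ΔΓ‖ * ‖sgnVec s‖ := ΔΓ.le_opNorm _
            _ ≤ ρ * Real.sqrt D :=
              mul_le_mul hΔΓ hnsgn (norm_nonneg _) hρ
  have hmain : ⟪s, Γ ((-k) • sgnVec s)⟫ = -k * (w * (∑ i, |s i|) + ⟪s, ΔΓ (sgnVec s)⟫) := by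
    rw [hΓ, real_inner_smul_right, inner_add_right, real_inner_smul_right, hinner]
  constructor
  · rw [hmain]
    have := (abs_le.1 hΔ).1
    nlinarith [mul_le_mul_of_nonneg_left this hk.le]
  · have hwpos : 0 < w := lt_of_le_of_lt (mul_nonneg hρ (Real.sqrt_nonneg _)) hw
    have hwk : 0 ≤ w * k := (mul_pos hwpos hk).le
    nlinarith [mul_le_mul_of_nonneg_left hl1 hwk, Real.sqrt_nonneg (D:ℝ)]
end

section
/- Let s : ℝ → ℝ^D be differentiable with s'(t) = Φ(t) - k • Γ(t) (sgn(s(t))), where ‖Φ(t)‖₂ ≤ δ, Γ(t) = w I + ΔΓ(t) with ‖ΔΓ(t)‖ ≤ ρ, and k > δ/(w - ρ√D) + ε for some ε > 0 and w > ρ√D. Then for V(t) = ½‖s(t)‖², V'(t) ≤ -ε(w - ρ√D) ‖s(t)‖ whenever s(t) ≠ 0. -/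
open scoped RealInnerProductSpace

lemma sgnVec_apply {D : ℕ} (s : EuclideanSpace ℝ (Fin D)) (i : Fin D) :
    sgnVec s i = Real.sign (s i) := rfl

lemma inner_sgnVec {D : ℕ} (v : EuclideanSpace ℝ (Fin D)) :
    ‖v‖ ≤ ⟪v, sgnVec v⟫ := by
  have h1 : ⟪v, sgnVec v⟫ = ∑ i, |v i| := by
    rw [PiLp.inner_apply]
    refine Finset.sum_congr rfl fun i _ => ?_
    simp only [RCLike.inner_apply, starRingEnd_apply, star_trivial, sgnVec_apply]
    rcases lt_trichotomy (v i) 0 with h | h | h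
    · rw [Real.sign_of_neg h, abs_of_neg h]; ring
    · simp [h]
    · rw [Real.sign_of_pos h, abs_of_pos h]; ring
  rw [h1]
  have h2 : ‖v‖ ^ 2 ≤ (∑ i, |v i|) ^ 2 := by
    rw [EuclideanSpace.norm_eq, Real.sq_sqrt (by positivity)]
    calc ∑ i, ‖v i‖ ^ 2 = ∑ i, |v i| ^ 2 := by simp [Real.norm_eq_abs]
      _ ≤ (∑ i, |v i|) ^ 2 :=
        Finset.sum_sq_le_sq_sum_of_nonneg (fun i _ => abs_nonneg _)
  nlinarith [norm_nonneg v,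
    Finset.sum_nonneg (fun i (_ : i ∈ (Finset.univ : Finset (Fin D))) => abs_nonneg (v i))]

lemma norm_sgnVec_le {D : ℕ} (v : EuclideanSpace ℝ (Fin D)) :
    ‖sgnVec v‖ ≤ Real.sqrt D := by
  rw [EuclideanSpace.norm_eq]
  apply Real.sqrt_le_sqrt
  calc ∑ i, ‖sgnVec v i‖ ^ 2 ≤ ∑ _i : Fin D, (1 : ℝ) := by
        refine Finset.sum_le_sum fun i _ => ?_
        have : |Real.sign (v i)| ≤ 1 := by
          rcases Real.sign_apply_eq (v i) with h | h | h <;> simp [sgnVec_apply, h]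
        calc ‖sgnVec v i‖ ^ 2 = |Real.sign (v i)| ^ 2 := by
              simp [sgnVec_apply, Real.norm_eq_abs, sq_abs]
          _ ≤ 1 ^ 2 := pow_le_pow_left₀ (abs_nonneg _) this 2
          _ = 1 := one_pow 2
    _ = D := by simp

theorem stmt_8 {D : ℕ} (s Φ : ℝ → EuclideanSpace ℝ (Fin D))
    (Γ ΔΓ : ℝ → EuclideanSpace ℝ (Fin D) →L[ℝ] EuclideanSpace ℝ (Fin D))
    (k w ρ δ ε : ℝ) (hk : 0 < k) (hw0 : 0 < w) (hρ : 0 ≤ ρ) (hδ : 0 ≤ δ) (hε : 0 < ε)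
    (hs : Differentiable ℝ s)
    (hΓ : ∀ t : ℝ, Γ t = w • ContinuousLinearMap.id ℝ (EuclideanSpace ℝ (Fin D)) + ΔΓ t)
    (hode : ∀ t : ℝ, deriv s t = Φ t - k • (Γ t) (sgnVec (s t)))
    (hΦ : ∀ t : ℝ, ‖Φ t‖ ≤ δ)
    (hΔΓ : ∀ t : ℝ, ‖ΔΓ t‖ ≤ ρ)
    (hw : ρ * Real.sqrt D < w)
    (hgain : δ / (w - ρ * Real.sqrt D) + ε < k) :
    ∀ t : ℝ, s t ≠ 0 →
      deriv (fun τ => (1 / 2) * ‖s τ‖ ^ 2) t ≤ -(ε * (w - ρ * Real.sqrt D) * ‖s t‖) := by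
  intro t hst
  -- derivative of V
  have hV : deriv (fun τ => (1 / 2 : ℝ) * ‖s τ‖ ^ 2) t = ⟪s t, deriv s t⟫ := by
    have hd : HasDerivAt (fun τ => ⟪s τ, s τ⟫) (⟪s t, deriv s t⟫ + ⟪deriv s t, s t⟫) t :=
      (hs t).hasDerivAt.inner ℝ (hs t).hasDerivAt
    have heq : (fun τ => (1 / 2 : ℝ) * ‖s τ‖ ^ 2) = fun τ => (1 / 2 : ℝ) * ⟪s τ, s τ⟫ := by
      funext τ; rw [real_inner_self_eq_norm_sq]
    rw [heq, (hd.const_mul (1 / 2 : ℝ)).deriv, real_inner_comm (deriv s t) (s t)]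
    ring
  rw [hV, hode t]
  set σ := sgnVec (s t)
  have hinner : ⟪s t, Φ t - k • (Γ t) σ⟫
      = ⟪s t, Φ t⟫ - k * (w * ⟪s t, σ⟫) - k * ⟪s t, (ΔΓ t) σ⟫ := by
    rw [inner_sub_right, real_inner_smul_right, hΓ t]
    simp only [ContinuousLinearMap.add_apply, ContinuousLinearMap.coe_smul',
      Pi.smul_apply, ContinuousLinearMap.id_apply, inner_add_right, real_inner_smul_right]
    ring
  rw [hinner]
  have hsn : 0 < ‖s t‖ := norm_pos_iff.mpr hst
  have h1 : ⟪s t, Φ t⟫ ≤ δ * ‖s t‖ := by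
    calc ⟪s t, Φ t⟫ ≤ ‖s t‖ * ‖Φ t‖ := real_inner_le_norm _ _
      _ ≤ ‖s t‖ * δ := by gcongr; exact hΦ t
      _ = δ * ‖s t‖ := mul_comm _ _
  have h2 : ‖s t‖ ≤ ⟪s t, σ⟫ := inner_sgnVec (s t)
  have h3 : -(ρ * Real.sqrt D * ‖s t‖) ≤ ⟪s t, (ΔΓ t) σ⟫ := by
    have habs : |⟪s t, (ΔΓ t) σ⟫| ≤ ρ * Real.sqrt D * ‖s t‖ := by
      calc |⟪s t, (ΔΓ t) σ⟫| ≤ ‖s t‖ * ‖(ΔΓ t) σ‖ := abs_real_inner_le_norm _ _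
        _ ≤ ‖s t‖ * (‖ΔΓ t‖ * ‖σ‖) := by gcongr; exact (ΔΓ t).le_opNorm σ
        _ ≤ ‖s t‖ * (ρ * Real.sqrt D) := by
            gcongr
            · exact hΔΓ t
            · exact norm_sgnVec_le (s t)
        _ = ρ * Real.sqrt D * ‖s t‖ := by ring
    linarith [(abs_le.mp habs).1]
  have hwD : 0 < w - ρ * Real.sqrt D := by linarith
  have hkbound : δ + ε * (w - ρ * Real.sqrt D) ≤ k * (w - ρ * Real.sqrt D) := by
    have := (div_le_iff₀ hwD).mp (le_of_lt (by linarith : δ / (w - ρ * Real.sqrt D) < k - ε))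
    nlinarith
  nlinarith [mul_le_mul_of_nonneg_left h2 (by positivity : (0:ℝ) ≤ k * w),
    mul_le_mul_of_nonneg_left h3 (le_of_lt hk)]
end
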